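/- The sorting map on ℝⁿ (which maps a vector to the vector of its entries rearranged in ascending order) is an isometry with respect to the ℓ₂ norm: ‖sort(x)‖₂ = ‖x‖₂ for all x, and moreover ‖sort(x) - sort(y)‖₂ ≤ ‖x - y‖₂. -/

import Mathlib

open scoped RealInnerProductSpace


/-- Rearranges the coordinates of a vector in ascending order. -/
noncomputable def sortVec {n : ℕ} (x : EuclideanSpace ℝ (Fin n)) :
    EuclideanSpace ℝ (Fin n) :=
  WithLp.toLp 2 (fun i => x (Tuple.sort x i))

theorem sort_isometry {n : ℕ} :
    (∀ x : EuclideanSpace ℝ (Fin n), ‖sortVec x‖ = ‖x‖) ∧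
    (∀ x y : EuclideanSpace ℝ (Fin n), ‖sortVec x - sortVec y‖ ≤ ‖x - y‖) := by
  have hnorm : ∀ x : EuclideanSpace ℝ (Fin n), ‖sortVec x‖ = ‖x‖ := by
    intro x
    rw [EuclideanSpace.norm_eq, EuclideanSpace.norm_eq]
    congr 1
    exact Equiv.sum_comp (Tuple.sort x) fun i => ‖x i‖ ^ 2
  refine ⟨hnorm, fun x y => ?_⟩
  have hmono : Monovary (sortVec x) (sortVec y) := by
    have hx : Monotone (sortVec x) := Tuple.monotone_sort x
    have hy : Monotone (sortVec y) := Tuple.monotone_sort y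
    exact hx.monovary hy
  have key : ∑ i, x i * y i ≤ ∑ i, sortVec x i * sortVec y i := by
    have h1 : ∑ i, x i * y i
        = ∑ i, sortVec x i * sortVec y (((Tuple.sort x).trans (Tuple.sort y).symm) i) := by
      rw [← Equiv.sum_comp (Tuple.sort x) (fun i => x i * y i)]
      refine Finset.sum_congr rfl fun i _ => ?_
      simp only [sortVec, Equiv.trans_apply]
      rw [Equiv.apply_symm_apply]
    rw [h1]
    exact hmono.sum_mul_comp_perm_le_sum_mul
  have h1 : ‖sortVec x - sortVec y‖ ^ 2 ≤ ‖x - y‖ ^ 2 := by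
    rw [norm_sub_sq_real, norm_sub_sq_real, hnorm, hnorm]
    simp only [PiLp.inner_apply, RCLike.inner_apply, starRingEnd_apply, star_trivial]
    simp only [mul_comm] at key ⊢
    linarith
  nlinarith [norm_nonneg (sortVec x - sortVec y), norm_nonneg (x - y)]
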